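/- Let T₁(x) = −2x ln x on (0,1]. The unique solution T₂ on [0,1] of (1/2)·x·T₂''(x) = −2·T₁(x) for 0 < x < 1 with T₂(0) = T₂(1) = 0 satisfies T₂(x) − T₁(x)² = 4x² ln x − 4x²(ln x)² + 6x(1 − x). -/

import Mathlib

open Set Topology Filter

lemma const_of_zero_deriv {h : ℝ → ℝ} (hd : ∀ x ∈ Ioo (0:ℝ) 1, HasDerivAt h 0 x) :
    ∀ x ∈ Ioo (0:ℝ) 1, ∀ y ∈ Ioo (0:ℝ) 1, h x = h y := by
  intro x hx y hy
  apply (convex_Ioo (0:ℝ) 1).is_const_of_fderivWithin_eq_zero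
    (fun z hz => ((hd z hz).differentiableAt).differentiableWithinAt) ?_ hx hy
  intro z hz
  rw [fderivWithin_of_isOpen isOpen_Ioo hz, (hd z hz).hasFDerivAt.fderiv]
  ext; simp

lemma hasDerivAt_F {x : ℝ} (hx : x ≠ 0) :
    HasDerivAt (fun x : ℝ => 4*x^2*Real.log x - 6*x^2 + 6*x)
      (8*x*Real.log x - 8*x + 6) x := by
  have h1 := (((hasDerivAt_pow 2 x).mul (Real.hasDerivAt_log hx)).const_mul 4 |>.sub
      ((hasDerivAt_pow 2 x).const_mul 6)).add ((hasDerivAt_id x).const_mul 6)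
  convert h1 using 1
  · rfl
  · rfl
  · funext y; simp [id]; ring
  · field_simp; ring

lemma hasDerivAt_F' {x : ℝ} (hx : x ≠ 0) :
    HasDerivAt (fun x : ℝ => 8*x*Real.log x - 8*x + 6) (8*Real.log x) x := by
  have h1 := (((hasDerivAt_id x).mul (Real.hasDerivAt_log hx)).const_mul 8 |>.sub
      ((hasDerivAt_id x).const_mul 8)).add_const 6
  convert h1 using 1
  · rfl
  · rfl
  · funext y; simp [id]; ring
  · simp only [id_eq]; field_simp; ring

lemma continuous_F : Continuous (fun x : ℝ => 4*x^2*Real.log x - 6*x^2 + 6*x) := by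
  have h : Continuous (fun x : ℝ => 4*(x*(x*Real.log x)) - 6*x^2 + 6*x) :=
    ((continuous_const.mul (continuous_id.mul Real.continuous_mul_log)).sub
      (continuous_const.mul (continuous_pow 2))).add (continuous_const.mul continuous_id)
  convert h using 1
  funext y; ring

/-- With T₁(x) = −2 x ln x, any solution T₂ of (1/2) x T₂''(x) = −2 T₁(x) on (0,1)
with T₂(0) = T₂(1) = 0 satisfies
T₂(x) − T₁(x)² = 4 x² ln x − 4 x² (ln x)² + 6 x (1 − x). -/
theorem stmt_7 (T₂ T₂' T₂'' : ℝ → ℝ)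
    (hcont : ContinuousOn T₂ (Icc 0 1))
    (hderiv : ∀ x ∈ Ioo (0 : ℝ) 1, HasDerivAt T₂ (T₂' x) x)
    (hderiv2 : ∀ x ∈ Ioo (0 : ℝ) 1, HasDerivAt T₂' (T₂'' x) x)
    (hode : ∀ x ∈ Ioo (0 : ℝ) 1,
      (1 / 2) * x * T₂'' x = -2 * (-2 * x * Real.log x))
    (hbc0 : T₂ 0 = 0) (hbc1 : T₂ 1 = 0) :
    ∀ x ∈ Icc (0 : ℝ) 1,
      T₂ x - (-2 * x * Real.log x) ^ 2 =
        4 * x ^ 2 * Real.log x - 4 * x ^ 2 * (Real.log x) ^ 2 + 6 * x * (1 - x) := by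
  set F : ℝ → ℝ := fun x => 4*x^2*Real.log x - 6*x^2 + 6*x with hF
  set F' : ℝ → ℝ := fun x => 8*x*Real.log x - 8*x + 6 with hF'
  have half : (1/2 : ℝ) ∈ Ioo (0:ℝ) 1 := by norm_num
  have hT2'' : ∀ x ∈ Ioo (0:ℝ) 1, T₂'' x = 8 * Real.log x := by
    intro x hx
    have h := hode x hx
    have hx0 : x ≠ 0 := ne_of_gt hx.1
    field_simp at h
    have h2 : x * T₂'' x = x * (8 * Real.log x) := by rw [h]; norm_num
    exact mul_left_cancel₀ hx0 h2
  -- T₂' - F' has derivative 0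
  have hD : ∀ x ∈ Ioo (0:ℝ) 1, HasDerivAt (fun x => T₂' x - F' x) 0 x := by
    intro x hx
    have := (hderiv2 x hx).sub (hasDerivAt_F' (ne_of_gt hx.1))
    rw [hT2'' x hx, sub_self] at this
    exact this
  set c : ℝ := T₂' (1/2) - F' (1/2) with hc
  have hDc : ∀ x ∈ Ioo (0:ℝ) 1, T₂' x - F' x = c :=
    fun x hx => const_of_zero_deriv hD x hx _ half
  -- G := T₂ - F - c·x has derivative 0
  set G : ℝ → ℝ := fun x => T₂ x - F x - c * x with hG
  have hGd : ∀ x ∈ Ioo (0:ℝ) 1, HasDerivAt G 0 x := by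
    intro x hx
    have := ((hderiv x hx).sub (hasDerivAt_F (ne_of_gt hx.1))).sub
      ((hasDerivAt_id x).const_mul c)
    have h2 : T₂' x - (8*x*Real.log x - 8*x + 6) - c * 1 = 0 := by
      have := hDc x hx; simp only [hF'] at this; linarith
    rw [h2] at this
    exact this
  set d : ℝ := G (1/2) with hd
  have hGeq : ∀ x ∈ Ioo (0:ℝ) 1, G x = d :=
    fun x hx => const_of_zero_deriv hGd x hx _ half
  have hGcont : ContinuousOn G (Icc 0 1) :=
    (hcont.sub continuous_F.continuousOn).sub (continuous_const.mul continuous_id).continuousOn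
  -- limit argument at a boundary point
  have key : ∀ a ∈ Icc (0:ℝ) 1, a ∈ closure (Ioo (0:ℝ) 1) → G a = d := by
    intro a ha hacl
    have hne : (𝓝[Ioo (0:ℝ) 1] a).NeBot := mem_closure_iff_nhdsWithin_neBot.mp hacl
    have h1 : Filter.Tendsto G (𝓝[Ioo (0:ℝ) 1] a) (nhds (G a)) :=
      (hGcont a ha).mono Ioo_subset_Icc_self
    have h2 : Filter.Tendsto G (𝓝[Ioo (0:ℝ) 1] a) (nhds d) := by
      refine Filter.Tendsto.congr' ?_ tendsto_const_nhds
      exact eventually_mem_nhdsWithin.mono (fun x hx => (hGeq x hx).symm)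
    exact tendsto_nhds_unique h1 h2
  have hcl : closure (Ioo (0:ℝ) 1) = Icc 0 1 := closure_Ioo one_ne_zero.symm
  have hG0 : G 0 = d := key 0 (by norm_num) (by rw [hcl]; norm_num)
  have hG1 : G 1 = d := key 1 (by norm_num) (by rw [hcl]; norm_num)
  have hd0 : d = 0 := by
    have : G 0 = 0 := by simp [hG, hF, hbc0, Real.log_zero]
    rw [← hG0, this]
  have hc0 : c = 0 := by
    have : G 1 = -c := by simp [hG, hF, hbc1, Real.log_one]; try ring
    rw [hG1, hd0] at this; linarith
  -- conclude T₂ = F on [0,1]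
  have hTF : ∀ x ∈ Icc (0:ℝ) 1, T₂ x = F x := by
    intro x hx
    rcases eq_or_lt_of_le hx.1 with h0 | h0
    · rw [← h0]; simp [hF, hbc0, Real.log_zero]
    rcases eq_or_lt_of_le hx.2 with h1 | h1
    · rw [h1]; simp [hF, hbc1, Real.log_one]
    have := hGeq x ⟨h0, h1⟩
    rw [hd0] at this
    simp only [hG, hc0, zero_mul, sub_zero, sub_eq_zero] at this
    exact this
  intro x hx
  rw [hTF x hx]
  simp only [hF]
  ring
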